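/- Given a short exact sequence of sheaves of abelian groups 0 → E → F → G → 0 on a topological space X with E flasque, the sequence of global sections 0 → E(X) → F(X) → G(X) → 0 is exact; in particular F(X) → G(X) is surjective. -/

import Mathlib

open CategoryTheory CategoryTheory.Limits TopologicalSpace Opposite

universe u

/-- The global sections functor on sheaves of abelian groups on a topological space `X`. -/
noncomputable def globalSections (X : TopCat.{u}) :
    Sheaf (Opens.grothendieckTopology X) AddCommGrpCat.{u} ⥤ AddCommGrpCat.{u} :=
  sheafToPresheaf (Opens.grothendieckTopology X) AddCommGrpCat.{u} ⋙
    (evaluation (Opens X)ᵒᵖ AddCommGrpCat.{u}).obj (op ⊤)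

instance (X : TopCat.{u}) :
    (sheafToPresheaf (Opens.grothendieckTopology X) AddCommGrpCat.{u}).Additive :=
  { map_add := rfl }

instance (X : TopCat.{u}) : (globalSections X).Additive := by
  unfold globalSections; infer_instance

/-- A sheaf `E` of abelian groups on a topological space `X` is flasque if for every open
`U ⊆ X` the restriction map `E(X) → E(U)` is surjective. -/
def Flasque {X : TopCat.{u}} (E : Sheaf (Opens.grothendieckTopology X) AddCommGrpCat.{u}) :
    Prop :=
  ∀ U : Opens X, Function.Surjective (E.val.map (homOfLE (le_top : U ≤ ⊤)).op)

section Aux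
variable {X : TopCat.{u}}


lemma res_res (F : TopCat.Presheaf AddCommGrpCat.{u} X) {U V W : Opens X} (a : U ⟶ V) (b : V ⟶ W)
    (t : F.obj (op W)) : F.map b.op ≫ F.map a.op = F.map (a ≫ b).op := by
  rw [← Functor.map_comp, ← op_comp]

lemma res_res' (F : TopCat.Presheaf AddCommGrpCat.{u} X) {U V W : Opens X} (a : U ⟶ V) (b : V ⟶ W)
    (t : F.obj (op W)) : F.map a.op (F.map b.op t) = F.map (a ≫ b).op t := by
  rw [← comp_apply, res_res F a b t]

lemma res_congr (F : TopCat.Presheaf AddCommGrpCat.{u} X) {U V : Opens X} (a b : U ⟶ V)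
    (t : F.obj (op V)) : F.map a.op t = F.map b.op t := by
  rw [Subsingleton.elim a b]

lemma nat_app {F G : TopCat.Presheaf AddCommGrpCat.{u} X} (φ : F ⟶ G) {U V : Opens X} (h : U ⟶ V)
    (t : F.obj (op V)) : φ.app (op U) (F.map h.op t) = G.map h.op (φ.app (op V) t) := by
  rw [← comp_apply, φ.naturality, comp_apply]

noncomputable def secU (U : Opens X) :
    Sheaf (Opens.grothendieckTopology X) AddCommGrpCat.{u} ⥤ AddCommGrpCat.{u} :=
  sheafToPresheaf _ _ ⋙ (evaluation (Opens X)ᵒᵖ AddCommGrpCat.{u}).obj (op U)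

noncomputable instance (U : Opens X) : PreservesFiniteLimits (secU (X := X) U) := by
  unfold secU; infer_instance

instance (U : Opens X) : (secU (X := X) U).Additive :=
  { map_add := rfl }

lemma zero_bot (G : TopCat.Sheaf AddCommGrpCat.{u} X) (t : G.1.obj (op ⊥)) : t = 0 := by
  refine G.eq_of_locally_eq' (fun i : ULift.{u} Empty => i.down.elim) ⊥
    (fun i => i.down.elim) (by simp) t 0 (fun i => i.down.elim)

lemma sections_surjective (S : ShortComplex (Sheaf (Opens.grothendieckTopology X) AddCommGrpCat.{u}))
    (hS : S.ShortExact) (hE : ∀ U : Opens X, Function.Surjective (S.X₁.val.map (homOfLE (le_top : U ≤ ⊤)).op))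
    (hex : ∀ (U : Opens X) (y : S.X₂.val.obj (op U)), S.g.hom.app (op U) y = 0 →
      ∃ x, S.f.hom.app (op U) x = y) :
    Function.Surjective (S.g.hom.app (op ⊤)) := by
  intro s
  have hepi := hS.epi_g
  have hls : Sheaf.IsLocallySurjective S.g :=
    (Sheaf.isLocallySurjective_iff_epi' (φ := S.g)).2 hepi
  let FF : TopCat.Sheaf AddCommGrpCat.{u} X := S.X₂
  let GG : TopCat.Sheaf AddCommGrpCat.{u} X := S.X₃
  -- the poset of partial lifts
  let α := {p : Σ U : Opens X, S.X₂.val.obj (op U) //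
    S.g.hom.app (op p.1) p.2 = S.X₃.val.map (homOfLE (le_top : p.1 ≤ ⊤)).op s}
  let r : α → α → Prop := fun p q =>
    ∃ h : p.1.1 ≤ q.1.1, S.X₂.val.map (homOfLE h).op q.1.2 = p.1.2
  have rtrans : ∀ {a b c : α}, r a b → r b c → r a c := by
    rintro a b c ⟨hab, eab⟩ ⟨hbc, ebc⟩
    refine ⟨hab.trans hbc, ?_⟩
    rw [← eab, ← ebc, res_res' S.X₂.val, res_congr]
  have habot : ∃ a : α, True := by
    refine ⟨⟨⟨⊥, 0⟩, ?_⟩, trivial⟩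
    rw [map_zero]
    exact (zero_bot GG _).symm
  obtain ⟨⟨abot, -⟩⟩ : Nonempty {a : α // True} := nonempty_subtype.2 habot
  -- Zorn
  have hzorn : ∃ m : α, ∀ a, r m a → r a m := by
    apply exists_maximal_of_chains_bounded (r := r) _ (fun {a b c} => rtrans)
    intro c hc
    rcases Set.eq_empty_or_nonempty c with rfl | hne
    · exact ⟨abot, by simp⟩
    · let U : c → Opens X := fun i => i.1.1.1
      let sf : ∀ i : c, S.X₂.val.obj (op (U i)) := fun i => i.1.1.2
      have hcompat : TopCat.Presheaf.IsCompatible FF.1 U sf := by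
        intro i j
        rcases eq_or_ne i j with rfl | hij
        · exact res_congr _ _ _ _
        · rcases hc i.2 j.2 (fun h => hij (Subtype.ext h)) with ⟨hle, he⟩ | ⟨hle, he⟩
          · rw [show sf i = FF.1.map (homOfLE hle).op (sf j) from he.symm,
              res_res' FF.1, res_congr]
          · rw [show sf j = FF.1.map (homOfLE hle).op (sf i) from he.symm,
              res_res' FF.1]
            exact res_congr FF.1 _ _ _
      obtain ⟨gl, hgl, -⟩ := FF.existsUnique_gluing U sf hcompat
      have hglP : S.g.hom.app (op (iSup U)) gl =
          S.X₃.val.map (homOfLE (le_top : iSup U ≤ ⊤)).op s := by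
        apply GG.eq_of_locally_eq' U (iSup U) (fun i => homOfLE (le_iSup U i)) le_rfl
        intro i
        rw [← nat_app, res_congr S.X₂.val _ (Opens.leSupr U i), hgl i]
        rw [i.1.2, res_res' S.X₃.val, res_congr]
      refine ⟨⟨⟨iSup U, gl⟩, hglP⟩, ?_⟩
      intro a ha
      refine ⟨le_iSup U ⟨a, ha⟩, ?_⟩
      rw [res_congr S.X₂.val _ (Opens.leSupr U ⟨a, ha⟩)]
      exact hgl ⟨a, ha⟩
  obtain ⟨⟨⟨U, t⟩, hm⟩, hmax⟩ := hzorn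
  -- the maximal element is defined on ⊤
  have hmtop : U = ⊤ := by
    by_contra hne
    have : ∃ x : X, x ∉ U := by
      by_contra h
      push_neg at h
      exact hne (le_antisymm le_top (fun x _ => h x))
    obtain ⟨x, hx⟩ := this
    -- a local lift of s near x
    have hmem := hls.imageSieve_mem s
    obtain ⟨V, fV, hsieve, hxV⟩ := hmem x trivial
    obtain ⟨t', ht'⟩ := hsieve
    -- correct the local lift on the overlap
    let W := U ⊓ V
    let d : S.X₂.val.obj (op W) :=
      S.X₂.val.map (homOfLE (inf_le_left : W ≤ U)).op t -
        S.X₂.val.map (homOfLE (inf_le_right : W ≤ V)).op t'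
    have hd : S.g.hom.app (op W) d = 0 := by
      simp only [d, map_sub]
      rw [nat_app S.g.hom, nat_app S.g.hom, hm, ht', res_res' S.X₃.val, res_res' S.X₃.val,
        res_congr S.X₃.val (homOfLE (inf_le_left : W ≤ U) ≫ homOfLE le_top)
          (homOfLE (inf_le_right : W ≤ V) ≫ fV), sub_self]
    obtain ⟨e, he⟩ := hex W d hd
    obtain ⟨ee, hee⟩ := hE W e
    let t'' : S.X₂.val.obj (op V) :=
      t' + S.f.hom.app (op V) (S.X₁.val.map (homOfLE (le_top : V ≤ ⊤)).op ee)
    have hgf : ∀ a, S.g.hom.app (op V) (S.f.hom.app (op V) a) = 0 := by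
      intro a
      have h0 := (S.map (secU (X := X) V)).zero
      have h2 := ConcreteCategory.congr_hom h0 a
      exact h2
    have hgt'' : S.g.hom.app (op V) t'' = S.X₃.val.map fV.op s := by
      simp only [t'', map_add, hgf, add_zero, ht']
    have hWt'' : S.X₂.val.map (homOfLE (inf_le_right : W ≤ V)).op t'' =
        S.X₂.val.map (homOfLE (inf_le_left : W ≤ U)).op t := by
      simp only [t'', map_add]
      rw [← nat_app S.f.hom, res_res' S.X₁.val,
        res_congr S.X₁.val _ (homOfLE (le_top : W ≤ ⊤)), hee, he]
      simp only [d]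
      abel
    have hW2 : ∀ (W' : Opens X) (hU' : W' ≤ U) (hV' : W' ≤ V),
        S.X₂.val.map (homOfLE hV').op t'' = S.X₂.val.map (homOfLE hU').op t := by
      intro W' hU' hV'
      have hW' : W' ≤ W := le_inf hU' hV'
      calc S.X₂.val.map (homOfLE hV').op t''
          = S.X₂.val.map (homOfLE hW').op
              (S.X₂.val.map (homOfLE (inf_le_right : W ≤ V)).op t'') := by
            rw [res_res' S.X₂.val]; exact res_congr _ _ _ _
        _ = S.X₂.val.map (homOfLE hW').op
              (S.X₂.val.map (homOfLE (inf_le_left : W ≤ U)).op t) := by rw [hWt'']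
        _ = S.X₂.val.map (homOfLE hU').op t := by
            rw [res_res' S.X₂.val]; exact res_congr _ _ _ _
    -- glue t and t'' over U ⊔ V
    let U2 : ULift.{u} Bool → Opens X := fun b => bif b.down then U else V
    let sf2 : ∀ i : ULift.{u} Bool, S.X₂.val.obj (op (U2 i)) := fun i =>
      match i with
      | ⟨true⟩ => t
      | ⟨false⟩ => t''
    have hcompat2 : TopCat.Presheaf.IsCompatible FF.1 U2 sf2 := by
      rintro ⟨(_|_)⟩ ⟨(_|_)⟩
      · exact res_congr FF.1 _ _ _
      · exact (res_congr FF.1 _ _ _).trans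
          ((hW2 _ inf_le_right inf_le_left).trans (res_congr FF.1 _ _ _))
      · exact (res_congr FF.1 _ _ _).trans
          (((hW2 _ inf_le_left inf_le_right).symm).trans (res_congr FF.1 _ _ _))
      · exact res_congr FF.1 _ _ _
    let iUV : ∀ i : ULift.{u} Bool, U2 i ⟶ U ⊔ V := fun i =>
      homOfLE (by obtain ⟨_|_⟩ := i; exacts [le_sup_right, le_sup_left])
    have hcov : U ⊔ V ≤ iSup U2 :=
      sup_le (le_iSup U2 ⟨true⟩) (le_iSup U2 ⟨false⟩)
    obtain ⟨gl, hgl, -⟩ := FF.existsUnique_gluing' U2 (U ⊔ V) iUV hcov sf2 hcompat2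
    have hglP2 : S.g.hom.app (op (U ⊔ V)) gl =
        S.X₃.val.map (homOfLE (le_top : U ⊔ V ≤ ⊤)).op s := by
      apply GG.eq_of_locally_eq' U2 (U ⊔ V) iUV hcov
      intro i
      rw [← nat_app S.g.hom (iUV i) gl, hgl i, res_res' S.X₃.val]
      obtain ⟨_|_⟩ := i
      · show S.g.hom.app (op V) t'' = _
        rw [hgt'']
        exact res_congr _ _ _ _
      · show S.g.hom.app (op U) t = _
        rw [hm]
        exact res_congr _ _ _ _
    have hrmq : r ⟨⟨U, t⟩, hm⟩ ⟨⟨U ⊔ V, gl⟩, hglP2⟩ :=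
      ⟨le_sup_left, (res_congr FF.1 _ (iUV ⟨true⟩) gl).trans (hgl ⟨true⟩)⟩
    obtain ⟨hle, -⟩ := hmax _ hrmq
    refine hx (hle ?_)
    show x ∈ ((U ⊔ V : Opens X) : Set X); rw [Opens.coe_sup]
    exact Or.inr hxV
  subst hmtop
  refine ⟨t, ?_⟩
  rw [hm, res_congr S.X₃.val _ (𝟙 ⊤), op_id, S.X₃.val.map_id]
  simp

lemma sections_left_exact (S : ShortComplex (Sheaf (Opens.grothendieckTopology X) AddCommGrpCat.{u}))
    (hS : S.ShortExact) (U : Opens X) :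
    Function.Injective (S.f.hom.app (op U)) ∧
      ∀ y, S.g.hom.app (op U) y = 0 → ∃ x, S.f.hom.app (op U) x = y := by
  have hm := hS.mono_f
  let T := S.map (secU U)
  have hmT : Mono T.f := by
    exact (secU U).map_mono S.f
  have hTe : T.Exact := by
    apply hS.exact.map_of_mono_of_preservesKernel (secU U) hm
    infer_instance
  constructor
  · rw [← AddCommGrpCat.mono_iff_injective]
    exact hmT
  · intro y hy
    exact (T.ab_exact_iff).1 hTe y hy

end Aux

/-- Given a short exact sequence of sheaves of abelian groups `0 → E → F → G → 0` on a
topological space `X` with `E` flasque, the sequence of global sections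
`0 → E(X) → F(X) → G(X) → 0` is exact; in particular `F(X) → G(X)` is surjective. -/
theorem flasque_global_sections_exact {X : TopCat.{u}}
    (S : ShortComplex (Sheaf (Opens.grothendieckTopology X) AddCommGrpCat.{u}))
    (hS : S.ShortExact) (hE : Flasque S.X₁) :
    Function.Injective (S.f.hom.app (op ⊤)) ∧
      (∀ y : S.X₂.val.obj (op ⊤),
        S.g.hom.app (op ⊤) y = 0 ↔ ∃ x : S.X₁.val.obj (op ⊤), S.f.hom.app (op ⊤) x = y) ∧
      Function.Surjective (S.g.hom.app (op ⊤)) := by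
  obtain ⟨hinj, hker⟩ := sections_left_exact S hS ⊤
  have hsur := sections_surjective S hS hE (fun U => (sections_left_exact S hS U).2)
  refine ⟨hinj, fun y => ⟨hker y, ?_⟩, hsur⟩
  rintro ⟨x, rfl⟩
  have h0 := (S.map (secU (X := X) ⊤)).zero
  exact ConcreteCategory.congr_hom h0 x
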